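/- Let A : [0,1] → ℝ be convex with A(0) = 0, nondecreasing, and suppose every subgradient v of A at any point z ∈ [0, 1-R) satisfies v ≤ R/(1-z), where 0 < R < 1. Then for any x with 0 ≤ x ≤ 1-R, A(x) ≤ -R·ln(1-x) ≤ 1/e. -/

import Mathlib

open Real Set Filter Topology

private lemma slope_step (A : ℝ → ℝ) (R : ℝ)
    (hconv : ConvexOn ℝ (Set.Icc (0:ℝ) 1) A)
    (hR0 : 0 < R)
    (hsub : ∀ z ∈ Set.Ico (0:ℝ) (1 - R), ∀ v : ℝ,
      (∀ y ∈ Set.Icc (0:ℝ) 1, A z + v * (y - z) ≤ A y) → v ≤ R / (1 - z))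
    {w z : ℝ} (hw : 0 ≤ w) (hwz : w < z) (hz : z < 1 - R) :
    A z - A w ≤ R * (z - w) / (1 - z) := by
  have hz0 : 0 < z := lt_of_le_of_lt hw hwz
  have hz1 : z < 1 := by linarith
  have hzm : z ∈ Set.Icc (0:ℝ) 1 := ⟨hz0.le, hz1.le⟩
  have h1m : (1:ℝ) ∈ Set.Icc (0:ℝ) 1 := ⟨by norm_num, le_refl 1⟩
  set S : Set ℝ := (fun t => (A z - A t) / (z - t)) '' (Set.Ico 0 z) with hS
  have hwS : (A z - A w) / (z - w) ∈ S := ⟨w, ⟨hw, hwz⟩, rfl⟩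
  have hne : S.Nonempty := ⟨_, hwS⟩
  have hbdd : BddAbove S := by
    refine ⟨(A 1 - A z) / (1 - z), ?_⟩
    rintro _ ⟨t, ht, rfl⟩
    exact hconv.slope_mono_adjacent ⟨ht.1, by linarith [ht.2]⟩ h1m ht.2 hz1
  set v := sSup S with hv
  have hsubgrad : ∀ y ∈ Set.Icc (0:ℝ) 1, A z + v * (y - z) ≤ A y := by
    intro y hy
    rcases lt_trichotomy y z with hlt | heq | hgt
    · have hyS : (A z - A y) / (z - y) ∈ S := ⟨y, ⟨hy.1, hlt⟩, rfl⟩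
      have h1 : (A z - A y) / (z - y) ≤ v := le_csSup hbdd hyS
      rw [div_le_iff₀ (by linarith)] at h1
      nlinarith
    · simp [heq]
    · have h1 : v ≤ (A y - A z) / (y - z) := by
        refine csSup_le hne ?_
        rintro _ ⟨t, ht, rfl⟩
        exact hconv.slope_mono_adjacent ⟨ht.1, by linarith [ht.2]⟩ hy ht.2 hgt
      rw [le_div_iff₀ (by linarith)] at h1
      nlinarith
  have hvb : v ≤ R / (1 - z) := hsub z ⟨hz0.le, hz⟩ v hsubgrad
  have h2 : (A z - A w) / (z - w) ≤ R / (1 - z) := (le_csSup hbdd hwS).trans hvb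
  rw [div_le_div_iff₀ (by linarith) (by linarith)] at h2
  rw [le_div_iff₀ (by linarith)]
  nlinarith

private lemma main_bound (A : ℝ → ℝ) (R : ℝ)
    (hconv : ConvexOn ℝ (Set.Icc (0:ℝ) 1) A)
    (hA0 : A 0 = 0)
    (hR0 : 0 < R)
    (hsub : ∀ z ∈ Set.Ico (0:ℝ) (1 - R), ∀ v : ℝ,
      (∀ y ∈ Set.Icc (0:ℝ) 1, A z + v * (y - z) ≤ A y) → v ≤ R / (1 - z))
    {x : ℝ} (hx0 : 0 ≤ x) (hx1 : x < 1 - R) :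
    A x ≤ -R * Real.log (1 - x) := by
  rcases eq_or_lt_of_le hx0 with h0 | hxpos
  · simp [← h0, hA0]
  have hx2 : x < 1 := by linarith
  have h1x : 0 < 1 - x := by linarith
  have key : ∀ n : ℕ, 1 ≤ n →
      A x ≤ -R * Real.log (1 - x) + (R * x * (1 / (1 - x) - 1)) / n := by
    intro n hn
    have hn0 : (0:ℝ) < n := by exact_mod_cast hn
    set h : ℝ := x / n with hh_def
    have hh : 0 < h := div_pos hxpos hn0
    have claim : ∀ k : ℕ, k ≤ n →
        A (k * h) ≤ -R * Real.log (1 - k * h) + R * h * (1 / (1 - k * h) - 1) := by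
      intro k
      induction k with
      | zero => intro _; simp [hA0]
      | succ k ih =>
        intro hk1
        have hk : k ≤ n := Nat.le_of_succ_le hk1
        have ihk := ih hk
        set w : ℝ := k * h with hw_def
        set z : ℝ := (k + 1 : ℕ) * h with hz_def
        have hzx : z ≤ x := by
          have h1 : ((k+1:ℕ):ℝ) ≤ n := by exact_mod_cast hk1
          have : z = ((k+1:ℕ):ℝ) * x / n := by rw [hz_def, hh_def]; ring
          rw [this]
          rw [div_le_iff₀ hn0]
          nlinarith
        have hw0 : (0:ℝ) ≤ w := by positivity
        have hzw : z = w + h := by rw [hz_def, hw_def]; push_cast; ring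
        have hwz : w < z := by rw [hzw]; linarith
        have hzR : z < 1 - R := lt_of_le_of_lt hzx hx1
        have h1w : 0 < 1 - w := by linarith
        have h1z : 0 < 1 - z := by linarith
        have step := slope_step A R hconv hR0 hsub hw0 hwz hzR
        have hstep : A z - A w ≤ R * h / (1 - z) := by
          have : z - w = h := by rw [hzw]; ring
          rwa [this] at step
        have hlog : Real.log (1 - z) - Real.log (1 - w) ≤ -h / (1 - w) := by
          have hq : 0 < (1 - z) / (1 - w) := div_pos h1z h1w
          have := Real.log_le_sub_one_of_pos hq
          rw [Real.log_div (ne_of_gt h1z) (ne_of_gt h1w)] at this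
          have heq : (1 - z) / (1 - w) - 1 = -h / (1 - w) := by
            rw [hzw]; field_simp; ring
          linarith [heq ▸ this]
        have hlogR : R * Real.log (1 - z) - R * Real.log (1 - w) ≤ R * (-h / (1 - w)) := by
          nlinarith
        have e1 : R * h / (1 - z) = R * h * (1 / (1 - z)) := by ring
        have e2 : R * (-h / (1 - w)) = -(R * h * (1 / (1 - w))) := by ring
        rw [e1] at hstep
        rw [e2] at hlogR
        -- goal : A z ≤ -R * log (1 - z) + R * h * (1 / (1 - z) - 1)
        have goal_eq : -R * Real.log (1 - z) + R * h * (1 / (1 - z) - 1)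
            = -R * Real.log (1 - z) + R * h * (1 / (1 - z)) - R * h := by ring
        rw [goal_eq]
        have ih_eq : -R * Real.log (1 - w) + R * h * (1 / (1 - w) - 1)
            = -R * Real.log (1 - w) + R * h * (1 / (1 - w)) - R * h := by ring
        rw [ih_eq] at ihk
        linarith
    have := claim n (le_refl n)
    have hnx : (n:ℝ) * h = x := by rw [hh_def]; field_simp
    rw [hnx] at this
    have : A x ≤ -R * Real.log (1 - x) + R * h * (1 / (1 - x) - 1) := this
    have heq : R * h * (1 / (1 - x) - 1) = (R * x * (1 / (1 - x) - 1)) / n := by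
      rw [hh_def]; ring
    linarith [heq ▸ this]
  have htends : Tendsto (fun n : ℕ => -R * Real.log (1 - x) + (R * x * (1 / (1 - x) - 1)) / n)
      atTop (𝓝 (-R * Real.log (1 - x) + 0)) :=
    tendsto_const_nhds.add (tendsto_const_div_atTop_nhds_zero_nat _)
  rw [add_zero] at htends
  exact ge_of_tendsto htends (eventually_atTop.2 ⟨1, key⟩)

/-- If `A : [0,1] → ℝ` is convex, nondecreasing with `A 0 = 0`, and every subgradient `v`
of `A` at any point `z ∈ [0, 1-R)` satisfies `v ≤ R/(1-z)` (where `0 < R < 1`), then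
for `0 ≤ x ≤ 1 - R` we have `A x ≤ -R·ln(1-x) ≤ 1/e`. -/
theorem convex_subgradient_bound (A : ℝ → ℝ) (R : ℝ)
    (hconv : ConvexOn ℝ (Set.Icc (0:ℝ) 1) A)
    (hA0 : A 0 = 0)
    (hmono : MonotoneOn A (Set.Icc (0:ℝ) 1))
    (hR0 : 0 < R) (hR1 : R < 1)
    (hsub : ∀ z ∈ Set.Ico (0:ℝ) (1 - R), ∀ v : ℝ,
      (∀ y ∈ Set.Icc (0:ℝ) 1, A z + v * (y - z) ≤ A y) → v ≤ R / (1 - z))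
    (x : ℝ) (hx0 : 0 ≤ x) (hx1 : x ≤ 1 - R) :
    A x ≤ -R * Real.log (1 - x) ∧ -R * Real.log (1 - x) ≤ 1 / Real.exp 1 := by
  have hx2 : x < 1 := by linarith
  have h1x : 0 < 1 - x := by linarith
  constructor
  · rcases lt_or_eq_of_le hx1 with hlt | heq
    · exact main_bound A R hconv hA0 hR0 hsub hx0 hlt
    · -- x = 1 - R : take the limit from the left
      have hxp : 0 < x := by rw [heq]; linarith
      set M := (A 1 - A x) / (1 - x) with hM
      have hbound : ∀ y ∈ Set.Ioo (0:ℝ) x,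
          A x ≤ -R * Real.log (1 - y) + M * (x - y) := by
        intro y hy
        have hslope : (A x - A y) / (x - y) ≤ M :=
          hconv.slope_mono_adjacent ⟨hy.1.le, by linarith [hy.2]⟩
            ⟨by norm_num, le_refl 1⟩ hy.2 hx2
        rw [div_le_iff₀ (by linarith [hy.2])] at hslope
        have hAy : A y ≤ -R * Real.log (1 - y) :=
          main_bound A R hconv hA0 hR0 hsub hy.1.le (by rw [← heq]; exact hy.2)
        linarith
      have hcont : ContinuousAt (fun y : ℝ => -R * Real.log (1 - y) + M * (x - y)) x := by
        have h1 : ContinuousAt (fun y : ℝ => Real.log (1 - y)) x :=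
          (Real.continuousAt_log (by linarith)).comp
            ((continuous_const.sub continuous_id).continuousAt)
        exact (continuousAt_const.mul h1).add
          (continuousAt_const.mul ((continuous_const.sub continuous_id).continuousAt))
      have htends : Tendsto (fun y : ℝ => -R * Real.log (1 - y) + M * (x - y))
          (𝓝[<] x) (𝓝 (-R * Real.log (1 - x))) := by
        have h := hcont.tendsto.mono_left (nhdsWithin_le_nhds (s := Set.Iio x))
        simpa using h
      exact ge_of_tendsto htends
        (eventually_of_mem (Ioo_mem_nhdsLT_of_mem ⟨hxp, le_refl x⟩) hbound)
  · have hRx : R ≤ 1 - x := by linarith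
    have hlog1 : Real.log R ≤ Real.log (1 - x) := Real.log_le_log hR0 hRx
    have h2 : -R * Real.log (1 - x) ≤ -R * Real.log R := by nlinarith
    have he : (0:ℝ) < Real.exp 1 := Real.exp_pos 1
    have hu : (0:ℝ) < 1 / (R * Real.exp 1) := by positivity
    have h3 := Real.log_le_sub_one_of_pos hu
    rw [Real.log_div one_ne_zero (by positivity),
        Real.log_mul (ne_of_gt hR0) (ne_of_gt he), Real.log_exp, Real.log_one] at h3
    -- h3 : 0 - (log R + 1) ≤ 1 / (R * exp 1) - 1
    have h4 : -Real.log R ≤ 1 / (R * Real.exp 1) := by linarith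
    have h5 : R * (1 / (R * Real.exp 1)) = 1 / Real.exp 1 := by field_simp
    nlinarith [mul_le_mul_of_nonneg_left h4 hR0.le]
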